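/- The consecutive patterns 0102 and 0112 in inversion sequences are super-strongly Wilf equivalent: for all n and all T ⊆ {1,...,n}, the number of inversion sequences of length n whose set of positions of occurrences of 0102 equals T is the same as the corresponding number for 0112. -/

import Mathlib

def IsInvSeq {n : ℕ} (e : Fin n → Fin n) : Prop := ∀ i : Fin n, (e i : ℕ) ≤ (i : ℕ)

def extSeq {n : ℕ} (e : Fin n → Fin n) : ℕ → ℕ := fun i => if h : i < n then (e ⟨i, h⟩ : ℕ) else 0

/-- Occurrence of 0102 in (0-indexed) position `i`: `e_i = e_{i+2} < e_{i+1} < e_{i+3}`. -/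
def Occ0102At (n : ℕ) (f : ℕ → ℕ) (i : ℕ) : Prop :=
  i + 3 < n ∧ f i = f (i + 2) ∧ f i < f (i + 1) ∧ f (i + 1) < f (i + 3)

/-- Occurrence of 0112 in (0-indexed) position `i`: `e_i < e_{i+1} = e_{i+2} < e_{i+3}`. -/
def Occ0112At (n : ℕ) (f : ℕ → ℕ) (i : ℕ) : Prop :=
  i + 3 < n ∧ f i < f (i + 1) ∧ f (i + 1) = f (i + 2) ∧ f (i + 2) < f (i + 3)

namespace Stmt19

instance (n : ℕ) (f : ℕ → ℕ) : DecidablePred (Occ0102At n f) := fun i => by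
  unfold Occ0102At; infer_instance

instance (n : ℕ) (f : ℕ → ℕ) : DecidablePred (Occ0112At n f) := fun i => by
  unfold Occ0112At; infer_instance

instance {n : ℕ} (e : Fin n → Fin n) : Decidable (IsInvSeq e) := by
  unfold IsInvSeq; infer_instance

def chainRoot (T : Finset ℕ) (j : ℕ) : ℕ :=
  if 2 ≤ j ∧ j - 2 ∈ T then chainRoot T (j - 2) else j
termination_by j
decreasing_by omega

lemma chainRoot_pos {T : Finset ℕ} {j : ℕ} (h : 2 ≤ j ∧ j - 2 ∈ T) :
    chainRoot T j = chainRoot T (j - 2) := by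
  rw [chainRoot]; simp [h]

lemma chainRoot_neg {T : Finset ℕ} {j : ℕ} (h : ¬(2 ≤ j ∧ j - 2 ∈ T)) :
    chainRoot T j = j := by
  rw [chainRoot]; simp [h]

lemma chainRoot_le (T : Finset ℕ) : ∀ j, chainRoot T j ≤ j := by
  intro j
  induction j using Nat.strong_induction_on with
  | _ j IH =>
    by_cases h : 2 ≤ j ∧ j - 2 ∈ T
    · rw [chainRoot_pos h]
      have := IH (j - 2) (by omega)
      omega
    · rw [chainRoot_neg h]

variable {n : ℕ}

def phi (T : Finset ℕ) (e : Fin n → Fin n) : Fin n → Fin n := fun j =>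
  if 2 ≤ (j : ℕ) ∧ (j : ℕ) - 2 ∈ T then
    e ⟨(j : ℕ) - 1, Nat.lt_of_le_of_lt (Nat.sub_le _ _) j.isLt⟩
  else e j

def psi (T : Finset ℕ) (e : Fin n → Fin n) : Fin n → Fin n := fun j =>
  e ⟨chainRoot T j, lt_of_le_of_lt (chainRoot_le T j) j.isLt⟩

lemma extSeq_lt (e : Fin n → Fin n) {j : ℕ} (h : j < n) : extSeq e j = (e ⟨j, h⟩ : ℕ) :=
  dif_pos h

lemma extSeq_ge (e : Fin n → Fin n) {j : ℕ} (h : ¬ j < n) : extSeq e j = 0 :=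
  dif_neg h

lemma extSeq_phi_pos {T : Finset ℕ} {e : Fin n → Fin n} {j : ℕ} (hj : j < n)
    (h : 2 ≤ j ∧ j - 2 ∈ T) : extSeq (phi T e) j = extSeq e (j - 1) := by
  rw [extSeq_lt _ hj, extSeq_lt _ (show j - 1 < n by omega)]
  simp only [phi, h, and_self, if_pos]

lemma extSeq_phi_neg {T : Finset ℕ} {e : Fin n → Fin n} {j : ℕ}
    (h : ¬(2 ≤ j ∧ j - 2 ∈ T)) : extSeq (phi T e) j = extSeq e j := by
  by_cases hj : j < n
  · rw [extSeq_lt _ hj, extSeq_lt _ hj]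
    simp only [phi]
    rw [if_neg h]
  · rw [extSeq_ge _ hj, extSeq_ge _ hj]

lemma extSeq_psi {T : Finset ℕ} {e : Fin n → Fin n} {j : ℕ} (hj : j < n) :
    extSeq (psi T e) j = extSeq e (chainRoot T j) := by
  rw [extSeq_lt _ hj, extSeq_lt _ (lt_of_le_of_lt (chainRoot_le T j) hj)]
  rfl

lemma eq_of_extSeq_eq {e e' : Fin n → Fin n} (h : ∀ j, extSeq e j = extSeq e' j) : e = e' := by
  funext j
  have := h j
  rw [extSeq_lt _ j.isLt, extSeq_lt _ j.isLt] at this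
  exact Fin.ext (by simpa using this)

section maps

variable {T : Finset ℕ} {e : Fin n → Fin n}

lemma adjA (hA : ∀ i ∈ T, Occ0102At n (extSeq e) i) {i : ℕ} (h1 : i ∈ T) (h2 : i + 1 ∈ T) :
    False := by
  obtain ⟨-, -, -, h4⟩ := hA i h1
  obtain ⟨-, h5, -, -⟩ := hA (i + 1) h2
  rw [show i + 1 + 2 = i + 3 from rfl] at h5
  omega

lemma adjB (hB : ∀ i ∈ T, Occ0112At n (extSeq e) i) {i : ℕ} (h1 : i ∈ T) (h2 : i + 1 ∈ T) :
    False := by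
  obtain ⟨-, -, h3, -⟩ := hB i h1
  obtain ⟨-, h4, -, -⟩ := hB (i + 1) h2
  rw [show i + 1 + 1 = i + 2 from rfl] at h4
  omega

lemma phi_mem (hInv : IsInvSeq e) (hA : ∀ i ∈ T, Occ0102At n (extSeq e) i) :
    IsInvSeq (phi T e) ∧ ∀ i ∈ T, Occ0112At n (extSeq (phi T e)) i := by
  constructor
  · intro j
    simp only [phi]
    split
    · exact le_trans (hInv _) (Nat.sub_le _ _)
    · exact hInv j
  · intro i hi
    obtain ⟨h3, q1, q2, q3⟩ := hA i hi
    have g1 : extSeq (phi T e) (i + 1) = extSeq e (i + 1) := by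
      apply extSeq_phi_neg
      rintro ⟨ha, hb⟩
      rw [show i + 1 - 2 = i - 1 by omega] at hb
      exact adjA hA hb (by rwa [show i - 1 + 1 = i by omega])
    have g2 : extSeq (phi T e) (i + 2) = extSeq e (i + 1) := by
      rw [extSeq_phi_pos (by omega) ⟨by omega, by rwa [show i + 2 - 2 = i from rfl]⟩]
      rw [show i + 2 - 1 = i + 1 from rfl]
    have g3 : extSeq (phi T e) (i + 3) = extSeq e (i + 3) := by
      apply extSeq_phi_neg
      rintro ⟨ha, hb⟩
      rw [show i + 3 - 2 = i + 1 from rfl] at hb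
      exact adjA hA hi hb
    refine ⟨h3, ?_, by rw [g1, g2], by rw [g2, g3]; exact q3⟩
    rw [g1]
    by_cases hc : 2 ≤ i ∧ i - 2 ∈ T
    · rw [extSeq_phi_pos (by omega) hc]
      obtain ⟨-, -, -, p3⟩ := hA (i - 2) hc.2
      rw [show i - 2 + 1 = i - 1 by omega, show i - 2 + 3 = i + 1 by omega] at p3
      exact p3
    · rw [extSeq_phi_neg hc]
      exact q2

lemma psi_key (hB : ∀ i ∈ T, Occ0112At n (extSeq e) i) :
    ∀ i ∈ T, extSeq e (chainRoot T i) < extSeq e (i + 1) := by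
  intro i
  induction i using Nat.strong_induction_on with
  | _ i IH =>
    intro hi
    by_cases hc : 2 ≤ i ∧ i - 2 ∈ T
    · rw [chainRoot_pos hc]
      have h1 := IH (i - 2) (by omega) hc.2
      obtain ⟨-, -, r2, r3⟩ := hB (i - 2) hc.2
      simp only [show i - 2 + 1 = i - 1 by omega, show i - 2 + 2 = i by omega,
        show i - 2 + 3 = i + 1 by omega] at h1 r2 r3
      omega
    · rw [chainRoot_neg hc]
      exact (hB i hi).2.1

lemma psi_mem (hInv : IsInvSeq e) (hB : ∀ i ∈ T, Occ0112At n (extSeq e) i) :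
    IsInvSeq (psi T e) ∧ ∀ i ∈ T, Occ0102At n (extSeq (psi T e)) i := by
  have hcr1 : ∀ i ∈ T, chainRoot T (i + 1) = i + 1 := by
    intro i hi
    apply chainRoot_neg
    rintro ⟨ha, hb⟩
    rw [show i + 1 - 2 = i - 1 by omega] at hb
    exact adjB hB hb (by rwa [show i - 1 + 1 = i by omega])
  have hcr3 : ∀ i ∈ T, chainRoot T (i + 3) = i + 3 := by
    intro i hi
    apply chainRoot_neg
    rintro ⟨ha, hb⟩
    rw [show i + 3 - 2 = i + 1 from rfl] at hb
    exact adjB hB hi hb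
  constructor
  · intro j
    refine le_trans (hInv _) ?_
    simpa using chainRoot_le T j
  · intro i hi
    obtain ⟨h3, r1, r2, r3⟩ := hB i hi
    have hpos : chainRoot T (i + 2) = chainRoot T i := by
      have h := chainRoot_pos (T := T) (j := i + 2) ⟨by omega, by simpa using hi⟩
      simpa using h
    refine ⟨h3, ?_, ?_, ?_⟩
    · rw [extSeq_psi (by omega), extSeq_psi (by omega), hpos]
    · rw [extSeq_psi (by omega), extSeq_psi (by omega), hcr1 i hi]
      exact psi_key hB i hi
    · rw [extSeq_psi (by omega), extSeq_psi (by omega), hcr1 i hi, hcr3 i hi]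
      omega

lemma psi_phi (hA : ∀ i ∈ T, Occ0102At n (extSeq e) i) : psi T (phi T e) = e := by
  apply eq_of_extSeq_eq
  intro j
  induction j using Nat.strong_induction_on with
  | _ j IH =>
    by_cases hj : j < n
    · rw [extSeq_psi hj]
      by_cases hc : 2 ≤ j ∧ j - 2 ∈ T
      · rw [chainRoot_pos hc]
        have e1 := IH (j - 2) (by omega)
        rw [extSeq_psi (show j - 2 < n by omega)] at e1
        rw [e1]
        obtain ⟨-, p1, -, -⟩ := hA (j - 2) hc.2
        rwa [show j - 2 + 2 = j by omega] at p1
      · rw [chainRoot_neg hc]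
        exact extSeq_phi_neg hc
    · rw [extSeq_ge _ hj, extSeq_ge _ hj]

lemma phi_psi (hB : ∀ i ∈ T, Occ0112At n (extSeq e) i) : phi T (psi T e) = e := by
  apply eq_of_extSeq_eq
  intro j
  by_cases hj : j < n
  · by_cases hc : 2 ≤ j ∧ j - 2 ∈ T
    · rw [extSeq_phi_pos hj hc, extSeq_psi (show j - 1 < n by omega)]
      have hcr : chainRoot T (j - 1) = j - 1 := by
        apply chainRoot_neg
        rintro ⟨ha, hb⟩
        rw [show j - 1 - 2 = j - 3 by omega] at hb
        exact adjB hB hb (by rw [show j - 3 + 1 = j - 2 by omega]; exact hc.2)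
      rw [hcr]
      obtain ⟨-, -, r2, -⟩ := hB (j - 2) hc.2
      rwa [show j - 2 + 1 = j - 1 by omega, show j - 2 + 2 = j by omega] at r2
    · rw [extSeq_phi_neg hc, extSeq_psi hj, chainRoot_neg hc]
  · rw [extSeq_ge _ hj, extSeq_ge _ hj]

end maps

def occA (n : ℕ) (e : Fin n → Fin n) : Finset ℕ :=
  (Finset.range n).filter (fun i => Occ0102At n (extSeq e) i)

def occB (n : ℕ) (e : Fin n → Fin n) : Finset ℕ :=
  (Finset.range n).filter (fun i => Occ0112At n (extSeq e) i)

def cA (n : ℕ) (R : Finset ℕ) : ℕ :=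
  (Finset.univ.filter (fun e : Fin n → Fin n => IsInvSeq e ∧ occA n e = R)).card

def cB (n : ℕ) (R : Finset ℕ) : ℕ :=
  (Finset.univ.filter (fun e : Fin n → Fin n => IsInvSeq e ∧ occB n e = R)).card

def mA (n : ℕ) (T : Finset ℕ) : ℕ :=
  (Finset.univ.filter (fun e : Fin n → Fin n => IsInvSeq e ∧ ∀ i ∈ T, Occ0102At n (extSeq e) i)).card

def mB (n : ℕ) (T : Finset ℕ) : ℕ :=
  (Finset.univ.filter (fun e : Fin n → Fin n => IsInvSeq e ∧ ∀ i ∈ T, Occ0112At n (extSeq e) i)).card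

lemma m_eq (T : Finset ℕ) : mA n T = mB n T := by
  apply Finset.card_bij' (fun e _ => phi T e) (fun e _ => psi T e)
  · intro e he
    rw [Finset.mem_filter] at he ⊢
    obtain ⟨-, hInv, hA⟩ := he
    exact ⟨Finset.mem_univ _, (phi_mem hInv hA).1, (phi_mem hInv hA).2⟩
  · intro e he
    rw [Finset.mem_filter] at he ⊢
    obtain ⟨-, hInv, hB⟩ := he
    exact ⟨Finset.mem_univ _, (psi_mem hInv hB).1, (psi_mem hInv hB).2⟩
  · intro e he
    rw [Finset.mem_filter] at he
    exact psi_phi he.2.2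
  · intro e he
    rw [Finset.mem_filter] at he
    exact phi_psi he.2.2

lemma decompA (T : Finset ℕ) (hTp : T ⊆ Finset.range n) :
    mA n T = cA n T +
      ∑ R ∈ (((Finset.range n).powerset.filter (fun R => T ⊆ R)).erase T), cA n R := by
  have hstep : mA n T = ∑ R ∈ (Finset.range n).powerset.filter (fun R => T ⊆ R), cA n R := by
    unfold mA
    rw [Finset.card_eq_sum_card_fiberwise
      (f := fun e => occA n e) (t := (Finset.range n).powerset.filter (fun R => T ⊆ R)) ?_]
    · apply Finset.sum_congr rfl
      intro R hR
      rw [Finset.mem_filter, Finset.mem_powerset] at hR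
      unfold cA
      rw [Finset.filter_filter]
      refine congrArg Finset.card ?_
      apply Finset.filter_congr
      intro e _
      constructor
      · rintro ⟨⟨h1, -⟩, h2⟩
        exact ⟨h1, h2⟩
      · rintro ⟨h1, h2⟩
        refine ⟨⟨h1, fun i hi => ?_⟩, h2⟩
        have : i ∈ occA n e := h2 ▸ hR.2 hi
        exact (Finset.mem_filter.1 this).2
    · intro e he
      rw [Finset.mem_coe, Finset.mem_filter] at he
      rw [Finset.mem_coe, Finset.mem_filter, Finset.mem_powerset]
      refine ⟨Finset.filter_subset _ _, fun i hi => ?_⟩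
      have ho := he.2.2 i hi
      exact Finset.mem_filter.2 ⟨Finset.mem_range.2 (by have := ho.1; omega), ho⟩
  rw [hstep]
  rw [← Finset.add_sum_erase _ _ (show T ∈ _ from Finset.mem_filter.2
    ⟨Finset.mem_powerset.2 hTp, Finset.Subset.refl T⟩)]

lemma decompB (T : Finset ℕ) (hTp : T ⊆ Finset.range n) :
    mB n T = cB n T +
      ∑ R ∈ (((Finset.range n).powerset.filter (fun R => T ⊆ R)).erase T), cB n R := by
  have hstep : mB n T = ∑ R ∈ (Finset.range n).powerset.filter (fun R => T ⊆ R), cB n R := by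
    unfold mB
    rw [Finset.card_eq_sum_card_fiberwise
      (f := fun e => occB n e) (t := (Finset.range n).powerset.filter (fun R => T ⊆ R)) ?_]
    · apply Finset.sum_congr rfl
      intro R hR
      rw [Finset.mem_filter, Finset.mem_powerset] at hR
      unfold cB
      rw [Finset.filter_filter]
      refine congrArg Finset.card ?_
      apply Finset.filter_congr
      intro e _
      constructor
      · rintro ⟨⟨h1, -⟩, h2⟩
        exact ⟨h1, h2⟩
      · rintro ⟨h1, h2⟩
        refine ⟨⟨h1, fun i hi => ?_⟩, h2⟩
        have : i ∈ occB n e := h2 ▸ hR.2 hi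
        exact (Finset.mem_filter.1 this).2
    · intro e he
      rw [Finset.mem_coe, Finset.mem_filter] at he
      rw [Finset.mem_coe, Finset.mem_filter, Finset.mem_powerset]
      refine ⟨Finset.filter_subset _ _, fun i hi => ?_⟩
      have ho := he.2.2 i hi
      exact Finset.mem_filter.2 ⟨Finset.mem_range.2 (by have := ho.1; omega), ho⟩
  rw [hstep]
  rw [← Finset.add_sum_erase _ _ (show T ∈ _ from Finset.mem_filter.2
    ⟨Finset.mem_powerset.2 hTp, Finset.Subset.refl T⟩)]

lemma key (n : ℕ) : ∀ (T : Finset ℕ), T ⊆ Finset.range n → cA n T = cB n T := by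
  suffices H : ∀ k (T : Finset ℕ), T ⊆ Finset.range n →
      (Finset.range n).card - T.card = k → cA n T = cB n T by
    exact fun T hT => H _ T hT rfl
  intro k
  induction k using Nat.strong_induction_on with
  | _ k IH =>
    intro T hTp hk
    have dA := decompA (n := n) T hTp
    have dB := decompB (n := n) T hTp
    have hm := m_eq (n := n) T
    have hS : ∑ R ∈ (((Finset.range n).powerset.filter (fun R => T ⊆ R)).erase T), cA n R
        = ∑ R ∈ (((Finset.range n).powerset.filter (fun R => T ⊆ R)).erase T), cB n R := by
      apply Finset.sum_congr rfl
      intro R hR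
      obtain ⟨hne, hRt⟩ := Finset.mem_erase.1 hR
      rw [Finset.mem_filter, Finset.mem_powerset] at hRt
      obtain ⟨hRp, hTR⟩ := hRt
      have hlt : T.card < R.card := Finset.card_lt_card (hTR.ssubset_of_ne (Ne.symm hne))
      have hle : R.card ≤ (Finset.range n).card := Finset.card_le_card hRp
      exact IH ((Finset.range n).card - R.card) (by omega) R hRp rfl
    omega

end Stmt19

theorem stmt19 (n : ℕ) (T : Finset ℕ) (hT : ∀ i ∈ T, i < n) :
    Nat.card {e : Fin n → Fin n // IsInvSeq e ∧ ∀ i : ℕ, Occ0102At n (extSeq e) i ↔ i ∈ T} =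
    Nat.card {e : Fin n → Fin n // IsInvSeq e ∧ ∀ i : ℕ, Occ0112At n (extSeq e) i ↔ i ∈ T} := by
  have hTp : T ⊆ Finset.range n := fun i hi => Finset.mem_range.2 (hT i hi)
  have hiffA : ∀ e : Fin n → Fin n,
      (IsInvSeq e ∧ ∀ i : ℕ, Occ0102At n (extSeq e) i ↔ i ∈ T) ↔
      (IsInvSeq e ∧ Stmt19.occA n e = T) := by
    intro e
    apply and_congr_right'
    constructor
    · intro h
      ext i
      simp only [Stmt19.occA, Finset.mem_filter, Finset.mem_range]
      constructor
      · rintro ⟨-, ho⟩; exact (h i).1 ho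
      · intro hi
        exact ⟨hT i hi, (h i).2 hi⟩
    · intro h i
      constructor
      · intro ho
        have : i ∈ Stmt19.occA n e := Finset.mem_filter.2
          ⟨Finset.mem_range.2 (by have := ho.1; omega), ho⟩
        rwa [h] at this
      · intro hi
        exact (Finset.mem_filter.1 (h ▸ hi)).2
  have hiffB : ∀ e : Fin n → Fin n,
      (IsInvSeq e ∧ ∀ i : ℕ, Occ0112At n (extSeq e) i ↔ i ∈ T) ↔
      (IsInvSeq e ∧ Stmt19.occB n e = T) := by
    intro e
    apply and_congr_right'
    constructor
    · intro h
      ext i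
      simp only [Stmt19.occB, Finset.mem_filter, Finset.mem_range]
      constructor
      · rintro ⟨-, ho⟩; exact (h i).1 ho
      · intro hi
        exact ⟨hT i hi, (h i).2 hi⟩
    · intro h i
      constructor
      · intro ho
        have : i ∈ Stmt19.occB n e := Finset.mem_filter.2
          ⟨Finset.mem_range.2 (by have := ho.1; omega), ho⟩
        rwa [h] at this
      · intro hi
        exact (Finset.mem_filter.1 (h ▸ hi)).2
  rw [Nat.card_congr (Equiv.subtypeEquivRight hiffA),
      Nat.card_congr (Equiv.subtypeEquivRight hiffB)]
  rw [Nat.card_eq_fintype_card, Nat.card_eq_fintype_card, Fintype.card_subtype,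
      Fintype.card_subtype]
  exact Stmt19.key n T hTp
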